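/- Nonnegativity of conditional permutation importance under MSE: with ŷ(x,z) = E[Y|X=x,Z=z] and Xᶜ ~ law(X|Z) conditionally independent of (X,Y) given Z, E[(Y − ŷ(Xᶜ,Z))²] ≥ E[(Y − ŷ(X,Z))²], with equality if and only if ŷ(X,Z) = E[Y|Z] almost surely (i.e. Var(ŷ(X,Z)|Z) = 0 a.s.). -/

import Mathlib

open MeasureTheory ProbabilityTheory

section CPIHelpers


lemma cpi_integrable_mul {α : Type*} [MeasurableSpace α] {μ : Measure α} {f g : α → ℝ}
    (hf : MemLp f 2 μ) (hg : MemLp g 2 μ) : Integrable (fun x => f x * g x) μ := by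
  have h := (((hf.add hg).integrable_sq.sub hf.integrable_sq).sub hg.integrable_sq).div_const 2
  refine h.congr (Filter.Eventually.of_forall fun x => ?_)
  simp only [Pi.sub_apply, Pi.add_apply]
  ring

lemma cpi_memℒp_condexp {α : Type*} {m m0 : MeasurableSpace α} {μ : Measure α}
    [IsFiniteMeasure μ] (hm : m ≤ m0) {f : α → ℝ} (hf : MemLp f 2 μ) :
    MemLp (μ[f|m]) 2 μ := by
  set fL : Lp ℝ 2 μ := hf.toLp f with hfL
  set g₂ : α → ℝ := ⇑((condExpL2 ℝ ℝ hm fL : lpMeas ℝ ℝ m 2 μ) : Lp ℝ 2 μ) with hg₂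
  have hg₂mem : MemLp g₂ 2 μ := Lp.memLp _
  have key : g₂ =ᵐ[μ] μ[f|m] := by
    refine ae_eq_condExp_of_forall_setIntegral_eq hm (hf.integrable one_le_two)
      (fun s hs hμs => (hg₂mem.integrable one_le_two).integrableOn)
      (fun s hs hμs => ?_) (lpMeas.aestronglyMeasurable _)
    have h1 := integral_condExpL2_eq (𝕜 := ℝ) (E' := ℝ) hm fL hs hμs.ne
    rw [h1]
    exact setIntegral_congr_ae (hm s hs) ((hf.coeFn_toLp).mono fun x hx _ => hx)
  exact hg₂mem.ae_eq key

lemma cpi_condexp_comp {Ω 𝒳 𝒵 : Type*} [MeasurableSpace Ω]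
    [MeasurableSpace 𝒳] [StandardBorelSpace 𝒳] [Nonempty 𝒳] [MeasurableSpace 𝒵]
    (P : Measure Ω) [IsProbabilityMeasure P]
    (X XC : Ω → 𝒳) (Z : Ω → 𝒵)
    (hX : Measurable X) (hXC : Measurable XC) (hZ : Measurable Z)
    (hcopy : condDistrib XC Z P =ᵐ[P.map Z] condDistrib X Z P)
    (F : 𝒳 → 𝒵 → ℝ) (hF : Measurable (Function.uncurry F))
    (hFX : Integrable (fun ω => F (X ω) (Z ω)) P)
    (hFXC : Integrable (fun ω => F (XC ω) (Z ω)) P) :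
    P[fun ω => F (XC ω) (Z ω) | MeasurableSpace.comap Z inferInstance]
      =ᵐ[P] P[fun ω => F (X ω) (Z ω) | MeasurableSpace.comap Z inferInstance] := by
  have hFsm : StronglyMeasurable (fun p : 𝒵 × 𝒳 => F p.2 p.1) :=
    (hF.comp measurable_swap).stronglyMeasurable
  have h1 := condExp_prod_ae_eq_integral_condDistrib (μ := P) hZ hXC.aemeasurable hFsm hFXC
  have h2 := condExp_prod_ae_eq_integral_condDistrib (μ := P) hZ hX.aemeasurable hFsm hFX
  have h3 : ∀ᵐ ω ∂P, condDistrib XC Z P (Z ω) = condDistrib X Z P (Z ω) :=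
    ae_of_ae_map hZ.aemeasurable hcopy
  have h4 : (fun a => ∫ y, F y (Z a) ∂(condDistrib XC Z P) (Z a))
      =ᵐ[P] fun a => ∫ y, F y (Z a) ∂(condDistrib X Z P) (Z a) :=
    h3.mono fun ω h => by simp only [h]
  exact h1.trans (h4.trans h2.symm)


variable {Ω 𝒳 𝒵 W : Type*} [mΩ : MeasurableSpace Ω] [StandardBorelSpace Ω]
    [MeasurableSpace 𝒳] [MeasurableSpace 𝒵] [MeasurableSpace W]

lemma cpi_key (P : Measure Ω) [IsProbabilityMeasure P]
    (XC : Ω → 𝒳) (V : Ω → W) (Y : Ω → ℝ) (Z : Ω → 𝒵)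
    (hXC : Measurable XC) (hV : Measurable V) (hZ : Measurable Z)
    (hmZ : MeasurableSpace.comap Z inferInstance ≤ mΩ)
    (hindep : CondIndepFun (MeasurableSpace.comap Z inferInstance) hmZ XC V P)
    (hYsm : StronglyMeasurable[MeasurableSpace.comap V inferInstance] Y)
    (hYint : Integrable Y P) :
    P[Y | MeasurableSpace.comap (fun ω => (XC ω, Z ω)) inferInstance]
      =ᵐ[P] P[Y | MeasurableSpace.comap Z inferInstance] := by
  have hm : MeasurableSpace.comap (fun ω => (XC ω, Z ω)) inferInstance ≤ mΩ :=
    (hXC.prodMk hZ).comap_le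
  -- conditional independence in set form
  have hCI : ∀ (A : Set 𝒳) (C : Set W), MeasurableSet A → MeasurableSet C →
      (P⟦XC ⁻¹' A ∩ V ⁻¹' C | MeasurableSpace.comap Z inferInstance⟧)
        =ᵐ[P] (P⟦XC ⁻¹' A | MeasurableSpace.comap Z inferInstance⟧)
          * (P⟦V ⁻¹' C | MeasurableSpace.comap Z inferInstance⟧) := by
    intro A C hA hC
    exact (condIndepFun_iff _ _ XC V hXC hV P).mp hindep _ _ ⟨A, hA, rfl⟩ ⟨C, hC, rfl⟩
  -- core: set-integral equality on rectangles for comap V-measurable integrable functions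
  have hQ : ∀ (f : Ω → ℝ), MemLp f 1 P →
      AEStronglyMeasurable[MeasurableSpace.comap V inferInstance] f P →
      ∀ (A : Set 𝒳), MeasurableSet A → ∀ (B : Set 𝒵), MeasurableSet B →
      ∫ ω in XC ⁻¹' A ∩ Z ⁻¹' B, f ω ∂P
        = ∫ ω in XC ⁻¹' A ∩ Z ⁻¹' B,
            (P[f | MeasurableSpace.comap Z inferInstance]) ω ∂P := by
    intro f hf hfm
    refine MemLp.induction_stronglyMeasurable (μ := P) hV.comap_le ENNReal.one_ne_top
      (fun f => ∀ (A : Set 𝒳), MeasurableSet A → ∀ (B : Set 𝒵), MeasurableSet B →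
        ∫ ω in XC ⁻¹' A ∩ Z ⁻¹' B, f ω ∂P
          = ∫ ω in XC ⁻¹' A ∩ Z ⁻¹' B,
              (P[f | MeasurableSpace.comap Z inferInstance]) ω ∂P)
      ?_ ?_ ?_ ?_ hf hfm
    · -- indicator case
      rintro c s ⟨C, hC, rfl⟩ hμs A hA B hB
      have hu : MeasurableSet (V ⁻¹' C) := hV hC
      have hA' : MeasurableSet (XC ⁻¹' A) := hXC hA
      have hB' : MeasurableSet (Z ⁻¹' B) := hZ hB
      have hBZ : MeasurableSet[MeasurableSpace.comap Z inferInstance] (Z ⁻¹' B) := ⟨B, hB, rfl⟩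
      set q : Ω → ℝ := P⟦XC ⁻¹' A | MeasurableSpace.comap Z inferInstance⟧ with hqdef
      set r : Ω → ℝ := P⟦V ⁻¹' C | MeasurableSpace.comap Z inferInstance⟧ with hrdef
      -- left-hand side
      have hLHS : ∫ ω in XC ⁻¹' A ∩ Z ⁻¹' B, (V ⁻¹' C).indicator (fun _ => c) ω ∂P
          = (∫ ω in Z ⁻¹' B, q ω * r ω ∂P) * c := by
        rw [setIntegral_indicator hu, setIntegral_const, smul_eq_mul]
        congr 1
        have hrect : (XC ⁻¹' A ∩ Z ⁻¹' B) ∩ V ⁻¹' C = Z ⁻¹' B ∩ (XC ⁻¹' A ∩ V ⁻¹' C) := by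
          ext x
          simp only [Set.mem_inter_iff, Set.mem_preimage]
          tauto
        have h1 : P.real ((XC ⁻¹' A ∩ Z ⁻¹' B) ∩ V ⁻¹' C)
            = ∫ ω in Z ⁻¹' B, (XC ⁻¹' A ∩ V ⁻¹' C).indicator (fun _ => (1:ℝ)) ω ∂P := by
          rw [setIntegral_indicator (hA'.inter hu), setIntegral_const, smul_eq_mul, mul_one,
            hrect]
        have h2 : ∫ ω in Z ⁻¹' B, (XC ⁻¹' A ∩ V ⁻¹' C).indicator (fun _ => (1:ℝ)) ω ∂P
            = ∫ ω in Z ⁻¹' B,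
                (P⟦XC ⁻¹' A ∩ V ⁻¹' C | MeasurableSpace.comap Z inferInstance⟧) ω ∂P :=
          (setIntegral_condExp hmZ ((integrable_const 1).indicator (hA'.inter hu)) hBZ).symm
        have h3 : ∫ ω in Z ⁻¹' B,
              (P⟦XC ⁻¹' A ∩ V ⁻¹' C | MeasurableSpace.comap Z inferInstance⟧) ω ∂P
            = ∫ ω in Z ⁻¹' B, q ω * r ω ∂P :=
          setIntegral_congr_ae hB' ((hCI A C hA hC).mono fun ω h _ => h)
        rw [h1, h2, h3]
      -- conditional expectation of the indicator
      have hind_eq : (V ⁻¹' C).indicator (fun _ => c)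
          = c • ((V ⁻¹' C).indicator fun _ => (1:ℝ)) := by
        funext ω
        by_cases h : ω ∈ V ⁻¹' C <;> simp [h]
      have hce : P[(V ⁻¹' C).indicator (fun _ => c) | MeasurableSpace.comap Z inferInstance]
          =ᵐ[P] fun ω => c * r ω := by
        rw [hind_eq]
        exact (condExp_smul (μ := P) (m := MeasurableSpace.comap Z inferInstance) c
          ((V ⁻¹' C).indicator fun _ => (1:ℝ))).mono fun ω h => by
            simpa [smul_eq_mul] using h
      -- right-hand side
      have hRHS : ∫ ω in XC ⁻¹' A ∩ Z ⁻¹' B,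
            (P[(V ⁻¹' C).indicator (fun _ => c) |
              MeasurableSpace.comap Z inferInstance]) ω ∂P
          = c * ∫ ω in Z ⁻¹' B, r ω * q ω ∂P := by
        rw [setIntegral_congr_ae (hA'.inter hB') (hce.mono fun ω h _ => h)]
        rw [integral_const_mul]
        congr 1
        have e1 : ∫ ω in XC ⁻¹' A ∩ Z ⁻¹' B, r ω ∂P
            = ∫ ω, ((Z ⁻¹' B).indicator r * (XC ⁻¹' A).indicator fun _ => (1:ℝ)) ω ∂P := by
          rw [← integral_indicator (hA'.inter hB')]
          congr 1
          funext ω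
          by_cases h1 : ω ∈ XC ⁻¹' A <;> by_cases h2 : ω ∈ Z ⁻¹' B <;>
            simp [Set.indicator_apply, Set.mem_inter_iff, h1, h2]
        have hh_sm : StronglyMeasurable[MeasurableSpace.comap Z inferInstance]
            ((Z ⁻¹' B).indicator r) := stronglyMeasurable_condExp.indicator hBZ
        have hint2 : Integrable ((XC ⁻¹' A).indicator fun _ => (1:ℝ)) P :=
          (integrable_const 1).indicator hA'
        have hint1 : Integrable
            ((Z ⁻¹' B).indicator r * (XC ⁻¹' A).indicator fun _ => (1:ℝ)) P := by
          have hprod : ((Z ⁻¹' B).indicator r * (XC ⁻¹' A).indicator fun _ => (1:ℝ))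
              = (XC ⁻¹' A).indicator ((Z ⁻¹' B).indicator r) := by
            funext ω
            by_cases h1 : ω ∈ XC ⁻¹' A <;> simp [Set.indicator_apply, h1]
          rw [hprod]
          exact (integrable_condExp.indicator (hmZ _ hBZ)).indicator hA'
        have e2 : ∫ ω, ((Z ⁻¹' B).indicator r * (XC ⁻¹' A).indicator fun _ => (1:ℝ)) ω ∂P
            = ∫ ω, (Z ⁻¹' B).indicator r ω * q ω ∂P := by
          rw [← integral_condExp (μ := P) hmZ]
          exact integral_congr_ae
            ((condExp_mul_of_stronglyMeasurable_left hh_sm hint1 hint2).trans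
              (Filter.EventuallyEq.rfl))
        have e3 : ∫ ω, (Z ⁻¹' B).indicator r ω * q ω ∂P
            = ∫ ω in Z ⁻¹' B, r ω * q ω ∂P := by
          rw [← integral_indicator hB']
          congr 1
          funext ω
          by_cases h : ω ∈ Z ⁻¹' B <;> simp [Set.indicator_apply, h]
        rw [e1, e2, e3]
      rw [hLHS, hRHS]
      rw [mul_comm]
      congr 1
      exact integral_congr_ae (Filter.Eventually.of_forall fun ω => mul_comm _ _)
    · -- additivity
      intro f g hdisj hfM hgM hfsm hgsm hPf hPg A hA B hB
      have measT : MeasurableSet (XC ⁻¹' A ∩ Z ⁻¹' B) := (hXC hA).inter (hZ hB)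
      have hfI : Integrable f P := memLp_one_iff_integrable.1 hfM
      have hgI : Integrable g P := memLp_one_iff_integrable.1 hgM
      have h1 : ∫ ω in XC ⁻¹' A ∩ Z ⁻¹' B, (f + g) ω ∂P
          = (∫ ω in XC ⁻¹' A ∩ Z ⁻¹' B, f ω ∂P) + ∫ ω in XC ⁻¹' A ∩ Z ⁻¹' B, g ω ∂P := by
        simp only [Pi.add_apply]
        exact integral_add hfI.integrableOn hgI.integrableOn
      have h2 : ∫ ω in XC ⁻¹' A ∩ Z ⁻¹' B,
            (P[f + g | MeasurableSpace.comap Z inferInstance]) ω ∂P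
          = (∫ ω in XC ⁻¹' A ∩ Z ⁻¹' B,
              (P[f | MeasurableSpace.comap Z inferInstance]) ω ∂P)
            + ∫ ω in XC ⁻¹' A ∩ Z ⁻¹' B,
              (P[g | MeasurableSpace.comap Z inferInstance]) ω ∂P := by
        rw [setIntegral_congr_ae measT ((condExp_add hfI hgI _).mono fun ω h _ => h)]
        simp only [Pi.add_apply]
        exact integral_add integrable_condExp.integrableOn integrable_condExp.integrableOn
      rw [h1, h2, hPf A hA B hB, hPg A hA B hB]
    · -- closedness
      simp only [Set.setOf_forall]
      refine isClosed_iInter fun A => isClosed_iInter fun hA => isClosed_iInter fun B =>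
        isClosed_iInter fun hB => isClosed_eq ?_ ?_
      · have heq : (fun f : lpMeas ℝ ℝ (MeasurableSpace.comap V inferInstance) 1 P =>
            ∫ ω in XC ⁻¹' A ∩ Z ⁻¹' B, (f : Ω → ℝ) ω ∂P)
            = (fun f : Lp ℝ 1 P => ∫ ω in XC ⁻¹' A ∩ Z ⁻¹' B, f ω ∂P)
              ∘ (Submodule.subtypeL _) := rfl
        rw [heq]
        exact (continuous_setIntegral _).comp (ContinuousLinearMap.continuous _)
      · have heq : (fun f : lpMeas ℝ ℝ (MeasurableSpace.comap V inferInstance) 1 P =>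
            ∫ ω in XC ⁻¹' A ∩ Z ⁻¹' B,
              (P[(f : Ω → ℝ) | MeasurableSpace.comap Z inferInstance]) ω ∂P)
            = (fun f : Lp ℝ 1 P => ∫ ω in XC ⁻¹' A ∩ Z ⁻¹' B, f ω ∂P)
              ∘ (condExpL1CLM ℝ hmZ P) ∘ (Submodule.subtypeL _) := by
          funext f
          simp only [Function.comp_apply]
          refine (setIntegral_congr_ae ((hXC hA).inter (hZ hB)) ?_).symm
          have hInt : Integrable ((f : Lp ℝ 1 P) : Ω → ℝ) P := L1.integrable_coeFn _
          have h0 : condExpL1 hmZ P ((f : Lp ℝ 1 P) : Ω → ℝ)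
              = condExpL1CLM ℝ hmZ P (hInt.toL1 _) := condExpL1_eq hInt
          rw [Integrable.toL1_coeFn _ hInt] at h0
          have h1 := condExp_ae_eq_condExpL1 (μ := P) hmZ ((f : Lp ℝ 1 P) : Ω → ℝ)
          rw [h0] at h1
          exact h1.symm.mono fun ω h _ => h
        rw [heq]
        exact (continuous_setIntegral _).comp
          ((condExpL1CLM ℝ hmZ P).continuous.comp (ContinuousLinearMap.continuous _))
    · -- a.e. congruence
      intro f g hfg hfM hPf A hA B hB
      have measT : MeasurableSet (XC ⁻¹' A ∩ Z ⁻¹' B) := (hXC hA).inter (hZ hB)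
      have h1 : ∫ ω in XC ⁻¹' A ∩ Z ⁻¹' B, g ω ∂P = ∫ ω in XC ⁻¹' A ∩ Z ⁻¹' B, f ω ∂P :=
        (setIntegral_congr_ae measT (hfg.mono fun ω h _ => h)).symm
      have h2 : ∫ ω in XC ⁻¹' A ∩ Z ⁻¹' B,
            (P[g | MeasurableSpace.comap Z inferInstance]) ω ∂P
          = ∫ ω in XC ⁻¹' A ∩ Z ⁻¹' B,
            (P[f | MeasurableSpace.comap Z inferInstance]) ω ∂P :=
        (setIntegral_congr_ae measT ((condExp_congr_ae hfg).mono fun ω h _ => h)).symm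
      rw [h1, h2]
      exact hPf A hA B hB
  -- extend to all (XC, Z)-measurable sets
  have hall : ∀ s : Set Ω,
      MeasurableSet[MeasurableSpace.comap (fun ω => (XC ω, Z ω)) inferInstance] s →
      ∫ ω in s, (P[Y | MeasurableSpace.comap Z inferInstance]) ω ∂P = ∫ ω in s, Y ω ∂P := by
    have hYg : Integrable (P[Y | MeasurableSpace.comap Z inferInstance]) P := integrable_condExp
    have hgen : (MeasurableSpace.comap (fun ω => (XC ω, Z ω)) inferInstance : MeasurableSpace Ω)
        = MeasurableSpace.generateFrom
          {t | ∃ A, MeasurableSet A ∧ ∃ B, MeasurableSet B ∧ t = XC ⁻¹' A ∩ Z ⁻¹' B} := by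
      refine le_antisymm ?_ (MeasurableSpace.generateFrom_le ?_)
      · rw [← measurable_iff_comap_le]
        refine Measurable.prod ?_ ?_
        · intro A hA
          exact MeasurableSpace.measurableSet_generateFrom
            ⟨A, hA, Set.univ, MeasurableSet.univ, by simp⟩
        · intro B hB
          exact MeasurableSpace.measurableSet_generateFrom
            ⟨Set.univ, MeasurableSet.univ, B, hB, by simp⟩
      · rintro t ⟨A, hA, B, hB, rfl⟩
        exact ⟨A ×ˢ B, hA.prod hB, by rw [Set.mk_preimage_prod]⟩
    have hpi : IsPiSystem
        {t : Set Ω | ∃ A, MeasurableSet A ∧ ∃ B, MeasurableSet B ∧ t = XC ⁻¹' A ∩ Z ⁻¹' B} := by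
      rintro t1 ⟨A1, hA1, B1, hB1, rfl⟩ t2 ⟨A2, hA2, B2, hB2, rfl⟩ -
      refine ⟨A1 ∩ A2, hA1.inter hA2, B1 ∩ B2, hB1.inter hB2, ?_⟩
      ext x
      simp only [Set.mem_inter_iff, Set.mem_preimage]
      tauto
    intro s hs
    refine MeasurableSpace.induction_on_inter
      (C := fun t _ => ∫ ω in t, (P[Y | MeasurableSpace.comap Z inferInstance]) ω ∂P
        = ∫ ω in t, Y ω ∂P)
      (m := MeasurableSpace.comap (fun ω => (XC ω, Z ω)) inferInstance) hgen hpi ?_ ?_ ?_ ?_ s hs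
    · simp
    · rintro t ⟨A, hA, B, hB, rfl⟩
      exact (hQ Y (memLp_one_iff_integrable.2 hYint) hYsm.aestronglyMeasurable A hA B hB).symm
    · intro t htm hC
      have ht : MeasurableSet t := hm _ htm
      have h1 := integral_add_compl ht hYg
      have h2 := integral_add_compl ht hYint
      have h3 : ∫ ω, (P[Y | MeasurableSpace.comap Z inferInstance]) ω ∂P = ∫ ω, Y ω ∂P :=
        integral_condExp hmZ
      linarith
    · intro u hdisj humeas hC
      have hu : ∀ i, MeasurableSet (u i) := fun i => hm _ (humeas i)
      rw [integral_iUnion hu hdisj hYg.integrableOn,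
        integral_iUnion hu hdisj hYint.integrableOn]
      exact tsum_congr hC
  have hle : MeasurableSpace.comap Z inferInstance
      ≤ MeasurableSpace.comap (fun ω => (XC ω, Z ω)) inferInstance := by
    rintro s ⟨B, hB, rfl⟩
    exact ⟨Set.univ ×ˢ B, MeasurableSet.univ.prod hB, by
      rw [Set.mk_preimage_prod]; simp⟩
  have hmeas' : AEStronglyMeasurable[
      (MeasurableSpace.comap (fun ω => (XC ω, Z ω)) inferInstance)]
      (P[Y | MeasurableSpace.comap Z inferInstance]) P :=
    ⟨_, stronglyMeasurable_condExp.mono hle, Filter.EventuallyEq.rfl⟩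
  exact (ae_eq_condExp_of_forall_setIntegral_eq hm hYint
    (fun s _ _ => integrable_condExp.integrableOn)
    (fun s hs _ => hall s hs) hmeas').symm


end CPIHelpers

/-- Nonnegativity of conditional permutation importance under MSE:
`E[(Y − ŷ(Xᶜ,Z))²] ≥ E[(Y − ŷ(X,Z))²]`, with equality if and only if
`ŷ(X,Z) = E[Y|Z]` almost surely. -/
theorem conditional_permutation_importance_nonneg
    {Ω 𝒳 𝒵 : Type*} [MeasurableSpace Ω] [StandardBorelSpace Ω] [Nonempty Ω]
    [MeasurableSpace 𝒳] [StandardBorelSpace 𝒳] [Nonempty 𝒳] [MeasurableSpace 𝒵]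
    (P : Measure Ω) [IsProbabilityMeasure P]
    (X XC : Ω → 𝒳) (Y : Ω → ℝ) (Z : Ω → 𝒵)
    (hX : Measurable X) (hXC : Measurable XC) (hY : Measurable Y) (hZ : Measurable Z)
    (hmZ : MeasurableSpace.comap Z inferInstance ≤ ‹MeasurableSpace Ω›)
    -- Xᶜ has the same conditional law as X given Z:
    (hcopy : condDistrib XC Z P =ᵐ[P.map Z] condDistrib X Z P)
    -- Xᶜ is conditionally independent of (X, Y) given Z:
    (hindep : CondIndepFun (MeasurableSpace.comap Z inferInstance) hmZ
      XC (fun ω => (X ω, Y ω)) P)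
    (yhat : 𝒳 → 𝒵 → ℝ) (hyhatmeas : Measurable (Function.uncurry yhat))
    -- ŷ(X,Z) is a version of the conditional expectation E[Y | X, Z]:
    (hyhat : (fun ω => yhat (X ω) (Z ω))
      =ᵐ[P] P[Y | MeasurableSpace.comap (fun ω => (X ω, Z ω)) inferInstance])
    (hY2 : MemLp Y 2 P)
    (hyhat2 : MemLp (fun ω => yhat (X ω) (Z ω)) 2 P)
    (hyhatC2 : MemLp (fun ω => yhat (XC ω) (Z ω)) 2 P) :
    (∫ ω, (Y ω - yhat (X ω) (Z ω)) ^ 2 ∂P) ≤ ∫ ω, (Y ω - yhat (XC ω) (Z ω)) ^ 2 ∂P ∧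
    ((∫ ω, (Y ω - yhat (XC ω) (Z ω)) ^ 2 ∂P) = (∫ ω, (Y ω - yhat (X ω) (Z ω)) ^ 2 ∂P) ↔
      (fun ω => yhat (X ω) (Z ω))
        =ᵐ[P] P[Y | MeasurableSpace.comap Z inferInstance]) := by
  have hmXZ : MeasurableSpace.comap (fun ω => (X ω, Z ω)) inferInstance
      ≤ ‹MeasurableSpace Ω› := (hX.prodMk hZ).comap_le
  have hmXCZ : MeasurableSpace.comap (fun ω => (XC ω, Z ω)) inferInstance
      ≤ ‹MeasurableSpace Ω› := (hXC.prodMk hZ).comap_le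
  set f : Ω → ℝ := fun ω => yhat (X ω) (Z ω) with hfdef
  set fc : Ω → ℝ := fun ω => yhat (XC ω) (Z ω) with hfcdef
  set g : Ω → ℝ := P[Y | MeasurableSpace.comap Z inferInstance] with hgdef
  have intY : Integrable Y P := hY2.integrable one_le_two
  have intf : Integrable f P := hyhat2.integrable one_le_two
  have intfc : Integrable fc P := hyhatC2.integrable one_le_two
  have hg2 : MemLp g 2 P := cpi_memℒp_condexp hmZ hY2
  -- strong measurability of f and fc w.r.t. the corresponding comap σ-algebras
  have hpairXZ : Measurable[MeasurableSpace.comap (fun ω => (X ω, Z ω)) inferInstance]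
      (fun ω => (X ω, Z ω)) := measurable_iff_comap_le.mpr le_rfl
  have hfsm : StronglyMeasurable[MeasurableSpace.comap (fun ω => (X ω, Z ω)) inferInstance] f :=
    (hyhatmeas.comp hpairXZ).stronglyMeasurable
  have hpairXCZ : Measurable[MeasurableSpace.comap (fun ω => (XC ω, Z ω)) inferInstance]
      (fun ω => (XC ω, Z ω)) := measurable_iff_comap_le.mpr le_rfl
  have hfcsm : StronglyMeasurable[MeasurableSpace.comap (fun ω => (XC ω, Z ω)) inferInstance]
      fc := (hyhatmeas.comp hpairXCZ).stronglyMeasurable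
  -- the key conditional-independence fact:  E[Y | XC, Z] = E[Y | Z]
  have hVm : Measurable[MeasurableSpace.comap (fun ω => (X ω, Y ω)) inferInstance]
      (fun ω => (X ω, Y ω)) := measurable_iff_comap_le.mpr le_rfl
  have hYsm : StronglyMeasurable[MeasurableSpace.comap (fun ω => (X ω, Y ω)) inferInstance] Y :=
    (measurable_snd.comp hVm).stronglyMeasurable
  have keyA : P[Y | MeasurableSpace.comap (fun ω => (XC ω, Z ω)) inferInstance] =ᵐ[P] g :=
    cpi_key P XC (fun ω => (X ω, Y ω)) Y Z hXC (hX.prodMk hY) hZ hmZ hindep hYsm intY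
  -- E[f | Z] = g and E[fc | Z] = g
  have hle : MeasurableSpace.comap Z inferInstance
      ≤ MeasurableSpace.comap (fun ω => (X ω, Z ω)) inferInstance := by
    rintro s ⟨B, hB, rfl⟩
    exact ⟨Set.univ ×ˢ B, MeasurableSet.univ.prod hB, by rw [Set.mk_preimage_prod]; simp⟩
  have hfg : P[f | MeasurableSpace.comap Z inferInstance] =ᵐ[P] g :=
    (condExp_congr_ae hyhat).trans (condExp_condExp_of_le hle hmXZ)
  have hfcg : P[fc | MeasurableSpace.comap Z inferInstance] =ᵐ[P] g :=
    (cpi_condexp_comp P X XC Z hX hXC hZ hcopy yhat hyhatmeas intf intfc).trans hfg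
  -- integral identities
  have I1 : ∫ ω, f ω * Y ω ∂P = ∫ ω, f ω * f ω ∂P := by
    rw [← integral_condExp (μ := P) hmXZ]
    refine integral_congr_ae ?_
    refine (condExp_mul_of_stronglyMeasurable_left hfsm ?_ intY).trans
      (hyhat.symm.mono fun ω h => ?_)
    · exact cpi_integrable_mul hyhat2 hY2
    · simp only [Pi.mul_apply]
      rw [h]
  have I2 : ∫ ω, fc ω * Y ω ∂P = ∫ ω, g ω * g ω ∂P := by
    have step1 : ∫ ω, fc ω * Y ω ∂P = ∫ ω, fc ω * g ω ∂P := by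
      rw [← integral_condExp (μ := P) hmXCZ]
      refine integral_congr_ae ?_
      refine (condExp_mul_of_stronglyMeasurable_left hfcsm ?_ intY).trans
        (keyA.mono fun ω h => ?_)
      · exact cpi_integrable_mul hyhatC2 hY2
      · simp only [Pi.mul_apply]
        rw [h]
    have step2 : ∫ ω, g ω * fc ω ∂P = ∫ ω, g ω * g ω ∂P := by
      rw [← integral_condExp (μ := P) hmZ]
      refine integral_congr_ae ?_
      refine (condExp_mul_of_stronglyMeasurable_left stronglyMeasurable_condExp ?_ intfc).trans
        (hfcg.mono fun ω h => ?_)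
      · exact cpi_integrable_mul hg2 hyhatC2
      · simp only [Pi.mul_apply]
        rw [h]
    rw [step1, ← step2]
    exact integral_congr_ae (Filter.Eventually.of_forall fun ω => mul_comm _ _)
  have I4 : ∫ ω, g ω * f ω ∂P = ∫ ω, g ω * g ω ∂P := by
    rw [← integral_condExp (μ := P) hmZ]
    refine integral_congr_ae ?_
    refine (condExp_mul_of_stronglyMeasurable_left stronglyMeasurable_condExp ?_ intf).trans
      (hfg.mono fun ω h => ?_)
    · exact cpi_integrable_mul hg2 hyhat2
    · simp only [Pi.mul_apply]
      rw [h]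
  have I5 : ∫ ω, fc ω * fc ω ∂P = ∫ ω, f ω * f ω ∂P := by
    have hcomp : P[(fun ω => fc ω * fc ω) | MeasurableSpace.comap Z inferInstance]
        =ᵐ[P] P[(fun ω => f ω * f ω) | MeasurableSpace.comap Z inferInstance] :=
      cpi_condexp_comp P X XC Z hX hXC hZ hcopy (fun x z => yhat x z * yhat x z)
        (hyhatmeas.mul hyhatmeas) (cpi_integrable_mul hyhat2 hyhat2)
        (cpi_integrable_mul hyhatC2 hyhatC2)
    calc ∫ ω, fc ω * fc ω ∂P
        = ∫ ω, (P[(fun ω => fc ω * fc ω) | MeasurableSpace.comap Z inferInstance]) ω ∂P :=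
          (integral_condExp (μ := P) hmZ).symm
      _ = ∫ ω, (P[(fun ω => f ω * f ω) | MeasurableSpace.comap Z inferInstance]) ω ∂P :=
          integral_congr_ae hcomp
      _ = ∫ ω, f ω * f ω ∂P := integral_condExp (μ := P) hmZ
  -- expansion of squares
  have expand : ∀ (h : Ω → ℝ), MemLp h 2 P →
      ∫ ω, (Y ω - h ω) ^ 2 ∂P
        = ∫ ω, Y ω * Y ω ∂P - 2 * ∫ ω, h ω * Y ω ∂P + ∫ ω, h ω * h ω ∂P := by
    intro h hh
    have e : (fun ω => (Y ω - h ω) ^ 2)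
        = fun ω => (Y ω * Y ω - 2 * (h ω * Y ω)) + h ω * h ω := funext fun ω => by ring
    have hint1 : Integrable (fun ω => Y ω * Y ω - 2 * (h ω * Y ω)) P :=
      (cpi_integrable_mul hY2 hY2).sub ((cpi_integrable_mul hh hY2).const_mul 2)
    rw [e, integral_add hint1 (cpi_integrable_mul hh hh),
      integral_sub (cpi_integrable_mul hY2 hY2) ((cpi_integrable_mul hh hY2).const_mul 2),
      integral_const_mul]
  have intsq : Integrable (fun ω => (f ω - g ω) ^ 2) P := (hyhat2.sub hg2).integrable_sq
  have hD : ∫ ω, (f ω - g ω) ^ 2 ∂P = ∫ ω, f ω * f ω ∂P - ∫ ω, g ω * g ω ∂P := by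
    have e : (fun ω => (f ω - g ω) ^ 2)
        = fun ω => (f ω * f ω - 2 * (g ω * f ω)) + g ω * g ω := funext fun ω => by ring
    have hint1 : Integrable (fun ω => f ω * f ω - 2 * (g ω * f ω)) P :=
      (cpi_integrable_mul hyhat2 hyhat2).sub ((cpi_integrable_mul hg2 hyhat2).const_mul 2)
    rw [e, integral_add hint1 (cpi_integrable_mul hg2 hg2),
      integral_sub (cpi_integrable_mul hyhat2 hyhat2)
        ((cpi_integrable_mul hg2 hyhat2).const_mul 2),
      integral_const_mul, I4]
    ring
  have main : ∫ ω, (Y ω - fc ω) ^ 2 ∂P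
      = (∫ ω, (Y ω - f ω) ^ 2 ∂P) + 2 * ∫ ω, (f ω - g ω) ^ 2 ∂P := by
    rw [expand f hyhat2, expand fc hyhatC2, hD, I1, I2, I5]
    ring
  have hpos : 0 ≤ ∫ ω, (f ω - g ω) ^ 2 ∂P := integral_nonneg fun ω => sq_nonneg _
  refine ⟨by rw [main]; linarith, ?_, ?_⟩
  · intro hEq
    have h0 : ∫ ω, (f ω - g ω) ^ 2 ∂P = 0 := by
      rw [main] at hEq
      linarith
    have hz := (integral_eq_zero_iff_of_nonneg (fun ω => sq_nonneg _) intsq).mp h0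
    refine hz.mono fun ω h => ?_
    have h' : (f ω - g ω) ^ 2 = 0 := h
    have := sq_eq_zero_iff.mp h'
    linarith
  · intro hfg'
    have hz : (fun ω => (f ω - g ω) ^ 2) =ᵐ[P] fun _ => (0 : ℝ) :=
      hfg'.mono fun ω h => by show (f ω - g ω) ^ 2 = 0; rw [h]; ring
    have h0 : ∫ ω, (f ω - g ω) ^ 2 ∂P = 0 := by
      rw [integral_congr_ae hz, integral_zero]
    rw [main, h0]
    ring
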